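/- Let X be a Banach space with a biorthogonal system ((x_β, f_β))_{β<κ} where κ is a regular uncountable cardinal, such that every f ∈ X* has countable support on the x_β's, and suppose the closed span of {x_β : β < κ} is X. If (z_σ)_{σ<κ} ⊂ X is a family such that z_σ → 0 weakly as σ → κ (i.e., for every f ∈ X*, f(z_σ) → 0 along the order on κ) and each z_σ lies in the closed span of countably many x_β's, then there is a subsequence (z_{σ_θ})_{θ<κ} whose supports (with respect to the biorthogonal functionals) are pairwise disjoint, and in fact successive: sup supp(z_{σ_{θ₁}}) < inf supp(z_{σ_{θ₂}}) for θ₁ < θ₂. -/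

import Mathlib

open Cardinal

set_option linter.deprecated false

/-- From a weakly null transfinite sequence of countably supported vectors with
respect to a countably supporting M-basis of regular uncountable length one can
extract a subsequence with successive (pairwise disjoint) supports. -/
theorem successive_supports_subsequence
    {X : Type*} [NormedAddCommGroup X] [NormedSpace ℝ X] [CompleteSpace X]
    (κ : Cardinal) (hreg : κ.IsRegular) (hunc : ℵ₀ < κ)
    (x : Ordinal → X) (f : Ordinal → (X →L[ℝ] ℝ))
    (hbi : ∀ α < κ.ord, ∀ β < κ.ord, f α (x β) = if α = β then 1 else 0)
    (hcnt : ∀ g : X →L[ℝ] ℝ, {β | β < κ.ord ∧ g (x β) ≠ 0}.Countable)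
    (hspan : (Submodule.span ℝ {v | ∃ β < κ.ord, v = x β}).topologicalClosure = ⊤)
    (z : Ordinal → X)
    (hweak : ∀ g : X →L[ℝ] ℝ, ∀ ε > (0:ℝ), ∃ σ₀ < κ.ord,
      ∀ σ, σ₀ < σ → σ < κ.ord → |g (z σ)| < ε)
    (hzcnt : ∀ σ < κ.ord, {β | β < κ.ord ∧ f β (z σ) ≠ 0}.Countable) :
    ∃ s : Ordinal → Ordinal, StrictMono s ∧ (∀ θ < κ.ord, s θ < κ.ord) ∧
      ∀ θ₁ θ₂, θ₁ < θ₂ → θ₂ < κ.ord →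
        ∀ β₁ β₂, β₁ < κ.ord → β₂ < κ.ord →
          f β₁ (z (s θ₁)) ≠ 0 → f β₂ (z (s θ₂)) ≠ 0 → β₁ < β₂ := by
  classical
  have hlim : Order.IsSuccLimit κ.ord := Cardinal.isSuccLimit_ord hreg.aleph0_le
  have haddone : ∀ {a : Ordinal}, a < κ.ord → a + 1 < κ.ord := by
    intro a ha
    rw [Ordinal.add_one_eq_succ]
    exact hlim.succ_lt ha
  have hzero : (0 : Ordinal) < κ.ord := hlim.pos
  -- Step 1: eventually each coordinate functional vanishes on the z's.
  have step1 : ∀ β : Ordinal, ∃ σ₀ < κ.ord,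
      ∀ σ, σ₀ < σ → σ < κ.ord → f β (z σ) = 0 := by
    intro β
    have h : ∀ n : ℕ, ∃ σ₀ < κ.ord,
        ∀ σ, σ₀ < σ → σ < κ.ord → |(f β) (z σ)| < 1 / (n + 1) := by
      intro n
      exact hweak (f β) (1 / (n + 1)) (by positivity)
    choose g hg1 hg2 using h
    refine ⟨iSup g, ?_, ?_⟩
    · exact iSup_lt_ord_lift_of_isRegular hreg
        (by simpa using hunc) hg1
    · intro σ hσ1 hσ2
      by_contra hne
      obtain ⟨n, hn⟩ := exists_nat_one_div_lt (abs_pos.2 hne)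
      exact absurd (hg2 n σ (lt_of_le_of_lt (Ordinal.le_iSup g n) hσ1) hσ2)
        (not_lt.2 hn.le)
  -- Step T: a threshold past which all coordinates ≤ γ vanish.
  have stepT : ∀ γ : Ordinal, ∃ t, t < κ.ord ∧ (γ < κ.ord → γ ≤ t ∧
      ∀ σ, t < σ → σ < κ.ord → ∀ β ≤ γ, f β (z σ) = 0) := by
    intro γ
    by_cases hγ : γ < κ.ord
    · choose g hg1 hg2 using step1
      refine ⟨γ ⊔ Ordinal.bsup (γ + 1) (fun β _ => g β), ?_, fun _ => ⟨le_sup_left, ?_⟩⟩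
      · refine max_lt hγ (bsup_lt_ord_of_isRegular hreg ?_ fun i _ => hg1 i)
        exact Cardinal.lt_ord.1 (haddone hγ)
      · intro σ hσ1 hσ2 β hβ
        refine hg2 β σ ?_ hσ2
        calc g β ≤ Ordinal.bsup (γ + 1) (fun β _ => g β) :=
              Ordinal.le_bsup _ β (lt_of_le_of_lt hβ
                (by rw [Ordinal.add_one_eq_succ]; exact Order.lt_succ γ))
          _ ≤ γ ⊔ Ordinal.bsup (γ + 1) (fun β _ => g β) := le_sup_right
          _ < σ := hσ1
    · exact ⟨0, hzero, fun h => absurd h hγ⟩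
  choose T hTlt hTprop using stepT
  -- Step D: a bound on the support of each z σ.
  have stepD : ∀ σ : Ordinal, ∃ d, d < κ.ord ∧ (σ < κ.ord →
      ∀ β < κ.ord, f β (z σ) ≠ 0 → β < d) := by
    intro σ
    by_cases hσ : σ < κ.ord
    · have hc := hzcnt σ hσ
      by_cases hne : {β | β < κ.ord ∧ f β (z σ) ≠ 0}.Nonempty
      · obtain ⟨g, hg⟩ := hc.exists_eq_range hne
        have hmem : ∀ n, g n < κ.ord ∧ f (g n) (z σ) ≠ 0 := by
          intro n
          have : g n ∈ {β | β < κ.ord ∧ f β (z σ) ≠ 0} := by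
            rw [hg]; exact ⟨n, rfl⟩
          exact this
        refine ⟨iSup g + 1, ?_, ?_⟩
        · exact haddone (iSup_lt_ord_lift_of_isRegular hreg (by simpa using hunc)
            fun n => (hmem n).1)
        · intro _ β hβ hneβ
          have hβmem : β ∈ {β | β < κ.ord ∧ f β (z σ) ≠ 0} := ⟨hβ, hneβ⟩
          rw [hg] at hβmem
          obtain ⟨n, hn⟩ := hβmem
          have : β ≤ iSup g := hn ▸ Ordinal.le_iSup g n
          exact lt_of_le_of_lt this (by rw [Ordinal.add_one_eq_succ]; exact Order.lt_succ _)
      · refine ⟨0 + 1, haddone hzero, ?_⟩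
        intro _ β hβ hneβ
        exact absurd ⟨β, hβ, hneβ⟩ hne
    · exact ⟨0 + 1, haddone hzero, fun h => absurd h hσ⟩
  choose D hDlt hDprop using stepD
  -- The recursive extraction.
  obtain ⟨s, hs_eq⟩ : ∃ s : Ordinal → Ordinal, ∀ θ,
      s θ = if θ < κ.ord
        then T (Ordinal.bsup θ (fun θ' _ => D (s θ') ⊔ (s θ' + 1))) + 1
        else Ordinal.bsup θ (fun θ' _ => s θ' + 1) := by
    refine ⟨Ordinal.lt_wf.fix (C := fun _ => Ordinal) (fun θ IH =>
      if θ < κ.ord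
        then T (Ordinal.bsup θ (fun θ' h => D (IH θ' h) ⊔ (IH θ' h + 1))) + 1
        else Ordinal.bsup θ (fun θ' h => IH θ' h + 1)), fun θ => ?_⟩
    exact WellFounded.fix_eq _ _ θ
  have hbound : ∀ θ < κ.ord, s θ < κ.ord := by
    intro θ hθ
    rw [hs_eq θ, if_pos hθ]
    exact haddone (hTlt _)
  -- Bounds on the intermediate sup at stages below κ.ord.
  have hgamma : ∀ θ < κ.ord,
      Ordinal.bsup θ (fun θ' _ => D (s θ') ⊔ (s θ' + 1)) < κ.ord := by
    intro θ hθ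
    refine bsup_lt_ord_of_isRegular hreg (Cardinal.lt_ord.1 hθ) ?_
    intro i hi
    exact max_lt (hDlt _) (haddone (hbound i (hi.trans hθ)))
  have hmono : StrictMono s := by
    intro θ' θ hlt
    by_cases hθ : θ < κ.ord
    · have hγ := hgamma θ hθ
      have h1 : s θ' + 1 ≤ Ordinal.bsup θ (fun θ' _ => D (s θ') ⊔ (s θ' + 1)) :=
        le_trans le_sup_right (Ordinal.le_bsup _ θ' hlt)
      have h2 := (hTprop _ hγ).1
      calc s θ' < s θ' + 1 := by
            rw [Ordinal.add_one_eq_succ]; exact Order.lt_succ _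
        _ ≤ T (Ordinal.bsup θ (fun θ' _ => D (s θ') ⊔ (s θ' + 1))) := h1.trans h2
        _ < T (Ordinal.bsup θ (fun θ' _ => D (s θ') ⊔ (s θ' + 1))) + 1 := by
            rw [Ordinal.add_one_eq_succ]; exact Order.lt_succ _
        _ = s θ := (hs_eq θ ▸ if_pos hθ).symm ▸ rfl
    · have : s θ' + 1 ≤ Ordinal.bsup θ (fun θ' _ => s θ' + 1) :=
        Ordinal.le_bsup _ θ' hlt
      rw [hs_eq θ, if_neg hθ]
      exact lt_of_lt_of_le (by rw [Ordinal.add_one_eq_succ]; exact Order.lt_succ _) this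
  refine ⟨s, hmono, hbound, ?_⟩
  intro θ₁ θ₂ h12 hθ₂ β₁ β₂ hβ₁ hβ₂ hne₁ hne₂
  have hθ₁ : θ₁ < κ.ord := h12.trans hθ₂
  have hβ₁D : β₁ < D (s θ₁) := hDprop _ (hbound θ₁ hθ₁) β₁ hβ₁ hne₁
  set γ := Ordinal.bsup θ₂ (fun θ' _ => D (s θ') ⊔ (s θ' + 1)) with hγdef
  have hγ : γ < κ.ord := hgamma θ₂ hθ₂
  have hDle : D (s θ₁) ≤ γ := le_trans le_sup_left (Ordinal.le_bsup _ θ₁ h12)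
  have hsθ₂ : s θ₂ = T γ + 1 := by rw [hs_eq θ₂, if_pos hθ₂]
  have hβ₂γ : γ < β₂ := by
    by_contra h
    push_neg at h
    refine hne₂ ((hTprop γ hγ).2 (s θ₂) ?_ (hbound θ₂ hθ₂) β₂ h)
    rw [hsθ₂, Ordinal.add_one_eq_succ]
    exact Order.lt_succ _
  exact lt_of_lt_of_le (lt_of_lt_of_le hβ₁D hDle) hβ₂γ.le
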